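/- Consider a commutative diagram of factor maps π : (X,G) → (Y,G), π_X : (X,G) → (Z,G), π_Y : (Y,G) → (Z,G) with π_Y ∘ π = π_X. If (y₁,…,y_n) is an off-diagonal n-tuple of Y with relative entropy dimension D̄(y₁,…,y_n|π_Y) = α, then there exists an off-diagonal n-tuple (x₁,…,x_n) of X with π(x_i) = y_i for each i and D̄(x₁,…,x_n|π_X) = α. -/

import Mathlib

open Filter Topology Pointwise
open scoped ENNReal

/-- A Følner sequence for a group `G`. -/
def IsFolnerSeq (G : Type*) [Group G] (F : ℕ → Finset G) : Prop :=
  (∀ n, (F n).Nonempty) ∧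
    ∀ (K : Finset G) (δ : ℝ), 0 < δ →
      ∀ᶠ n in atTop,
        ((symmDiff ((K : Set G) * ((F n : Set G))) ((F n : Set G))).ncard : ℝ) <
          δ * ((F n).card : ℝ)

/-- Amenability of a (countable discrete) group via almost invariant finite sets. -/
def IsAmenableGrp (G : Type*) [Group G] : Prop :=
  ∀ K : Finset G, K.Nonempty → ∀ δ : ℝ, 0 < δ →
    ∃ F : Finset G, F.Nonempty ∧
      ((symmDiff ((K : Set G) * (F : Set G)) (F : Set G)).ncard : ℝ) < δ * (F.card : ℝ)

/-- The finite set `A ∩ S`. -/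
noncomputable def interF {G : Type*} (A : Finset G) (S : Set G) : Finset G :=
  @Finset.filter G (fun g => g ∈ S) (Classical.decPred _) A

/-- `S` belongs to `𝓘(G)` : `|S ∩ F n| → ∞`. -/
def InI {G : Type*} (F : ℕ → Finset G) (S : Set G) : Prop :=
  Tendsto (fun n => (interF (F n) S).card) atTop atTop

/-- `D̄(S, α) = limsup_n |S ∩ F n| / |F n|^α`. -/
noncomputable def DbarAt {G : Type*} (F : ℕ → Finset G) (S : Set G) (α : ℝ) : ℝ≥0∞ :=
  atTop.limsup fun n =>
    ((interF (F n) S).card : ℝ≥0∞) / ENNReal.ofReal (((F n).card : ℝ) ^ α)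

/-- `D̲(S, α) = liminf_n |S ∩ F n| / |F n|^α`. -/
noncomputable def DlowAt {G : Type*} (F : ℕ → Finset G) (S : Set G) (α : ℝ) : ℝ≥0∞ :=
  atTop.liminf fun n =>
    ((interF (F n) S).card : ℝ≥0∞) / ENNReal.ofReal (((F n).card : ℝ) ^ α)

/-- The upper dimension `D̄(S)` of a subset `S ⊆ G`. -/
noncomputable def upperDim {G : Type*} (F : ℕ → Finset G) (S : Set G) : ℝ :=
  sInf {α : ℝ | 0 ≤ α ∧ DbarAt F S α = 0}

/-- The lower dimension `D̲(S)` of a subset `S ⊆ G`. -/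
noncomputable def lowerDim {G : Type*} (F : ℕ → Finset G) (S : Set G) : ℝ :=
  sInf {α : ℝ | 0 ≤ α ∧ DlowAt F S α = 0}

/-- A finite open cover of `X`. -/
def IsOpenCover {X : Type*} [TopologicalSpace X] (𝒰 : Set (Set X)) : Prop :=
  𝒰.Finite ∧ (∀ U ∈ 𝒰, IsOpen U) ∧ ⋃₀ 𝒰 = Set.univ

/-- Minimal number of members of `𝒰` needed to cover `E`. -/
noncomputable def coverNum {X : Type*} (𝒰 : Set (Set X)) (E : Set X) : ℕ :=
  sInf {k | ∃ t : Finset (Set X), ↑t ⊆ 𝒰 ∧ t.card = k ∧ E ⊆ ⋃₀ (t : Set (Set X))}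

/-- `N(𝒰 | π) = sup_y` of the covering number of the fiber `π ⁻¹ y`. -/
noncomputable def NRel {X Y : Type*} (𝒰 : Set (Set X)) (π : X → Y) : ℕ :=
  ⨆ y : Y, coverNum 𝒰 (π ⁻¹' {y})

/-- A factor map between `G`-systems. -/
def IsFactorMap (G : Type*) {X Y : Type*} [Group G] [TopologicalSpace X] [TopologicalSpace Y]
    [MulAction G X] [MulAction G Y] (π : X → Y) : Prop :=
  Continuous π ∧ Function.Surjective π ∧ ∀ (g : G) (x : X), π (g • x) = g • π x

/-- The join `⋁_{g ∈ B} g⁻¹ 𝒰`. -/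
def dynJoin {G X : Type*} [Group G] [MulAction G X] (B : Finset G) (𝒰 : Set (Set X)) :
    Set (Set X) :=
  {W | ∃ f : G → Set X, (∀ g ∈ B, f g ∈ 𝒰) ∧ W = ⋂ g ∈ B, (fun x => g • x) ⁻¹' f g}

/-- `h̄(G, 𝒰, α | π)`. -/
noncomputable def hRelU {G X Y : Type*} [Group G] [MulAction G X]
    (F : ℕ → Finset G) (𝒰 : Set (Set X)) (π : X → Y) (α : ℝ) : ℝ≥0∞ :=
  atTop.limsup fun n =>
    ENNReal.ofReal (Real.log (NRel (dynJoin (F n) 𝒰) π)) /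
      ENNReal.ofReal (((F n).card : ℝ) ^ α)

/-- `h̲(G, 𝒰, α | π)`. -/
noncomputable def hRelL {G X Y : Type*} [Group G] [MulAction G X]
    (F : ℕ → Finset G) (𝒰 : Set (Set X)) (π : X → Y) (α : ℝ) : ℝ≥0∞ :=
  atTop.liminf fun n =>
    ENNReal.ofReal (Real.log (NRel (dynJoin (F n) 𝒰) π)) /
      ENNReal.ofReal (((F n).card : ℝ) ^ α)

/-- The relative upper entropy dimension `D̄(G, 𝒰 | π)` of a cover. -/
noncomputable def DU {G X Y : Type*} [Group G] [MulAction G X]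
    (F : ℕ → Finset G) (𝒰 : Set (Set X)) (π : X → Y) : ℝ :=
  sInf {α : ℝ | 0 ≤ α ∧ hRelU F 𝒰 π α = 0}

/-- The relative lower entropy dimension `D̲(G, 𝒰 | π)` of a cover. -/
noncomputable def DL {G X Y : Type*} [Group G] [MulAction G X]
    (F : ℕ → Finset G) (𝒰 : Set (Set X)) (π : X → Y) : ℝ :=
  sInf {α : ℝ | 0 ≤ α ∧ hRelL F 𝒰 π α = 0}

/-- The relative upper entropy dimension `D̄(X, G | π)` of the system. -/
noncomputable def DUSys {G X Y : Type*} [Group G] [TopologicalSpace X] [MulAction G X]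
    (F : ℕ → Finset G) (π : X → Y) : ℝ :=
  sSup {d : ℝ | ∃ 𝒰 : Set (Set X), IsOpenCover 𝒰 ∧ d = DU F 𝒰 π}

/-- The relative lower entropy dimension `D̲(X, G | π)` of the system. -/
noncomputable def DLSys {G X Y : Type*} [Group G] [TopologicalSpace X] [MulAction G X]
    (F : ℕ → Finset G) (π : X → Y) : ℝ :=
  sSup {d : ℝ | ∃ 𝒰 : Set (Set X), IsOpenCover 𝒰 ∧ d = DL F 𝒰 π}

/-- `(1 / |F n ∩ S|) log N(⋁_{g ∈ F n ∩ S} g⁻¹ 𝒰 | π)`. -/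
noncomputable def entAlong {G X Y : Type*} [Group G] [MulAction G X]
    (F : ℕ → Finset G) (S : Set G) (𝒰 : Set (Set X)) (π : X → Y) : ℕ → ℝ≥0∞ :=
  fun n =>
    ENNReal.ofReal (Real.log (NRel (dynJoin (interF (F n) S) 𝒰) π)) /
      ((interF (F n) S).card : ℝ≥0∞)

/-- `S` is a relative entropy generating set of `𝒰` relative to `π`. -/
def IsEntGen {G X Y : Type*} [Group G] [MulAction G X]
    (F : ℕ → Finset G) (S : Set G) (𝒰 : Set (Set X)) (π : X → Y) : Prop :=
  InI F S ∧ 0 < atTop.liminf (entAlong F S 𝒰 π)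

/-- `S ∈ 𝒫(G, 𝒰 | π)` : positive relative upper entropy along `S`. -/
def InP {G X Y : Type*} [Group G] [MulAction G X]
    (F : ℕ → Finset G) (S : Set G) (𝒰 : Set (Set X)) (π : X → Y) : Prop :=
  InI F S ∧ 0 < atTop.limsup (entAlong F S 𝒰 π)

/-- `D̄_e(G, 𝒰 | π)`. -/
noncomputable def DeU {G X Y : Type*} [Group G] [MulAction G X]
    (F : ℕ → Finset G) (𝒰 : Set (Set X)) (π : X → Y) : ℝ :=
  sSup {d : ℝ | ∃ S : Set G, IsEntGen F S 𝒰 π ∧ d = upperDim F S}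

/-- `D̲_e(G, 𝒰 | π)`. -/
noncomputable def DeL {G X Y : Type*} [Group G] [MulAction G X]
    (F : ℕ → Finset G) (𝒰 : Set (Set X)) (π : X → Y) : ℝ :=
  sSup {d : ℝ | ∃ S : Set G, IsEntGen F S 𝒰 π ∧ d = lowerDim F S}

/-- `D̄_p(G, 𝒰 | π)`. -/
noncomputable def DpU {G X Y : Type*} [Group G] [MulAction G X]
    (F : ℕ → Finset G) (𝒰 : Set (Set X)) (π : X → Y) : ℝ :=
  sSup {d : ℝ | ∃ S : Set G, InP F S 𝒰 π ∧ d = upperDim F S}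

/-- `D̲_p(G, 𝒰 | π)`. -/
noncomputable def DpL {G X Y : Type*} [Group G] [MulAction G X]
    (F : ℕ → Finset G) (𝒰 : Set (Set X)) (π : X → Y) : ℝ :=
  sSup {d : ℝ | ∃ S : Set G, InP F S 𝒰 π ∧ d = lowerDim F S}

/-- `D̄_e(X, G | π)`. -/
noncomputable def DeUSys {G X Y : Type*} [Group G] [TopologicalSpace X] [MulAction G X]
    (F : ℕ → Finset G) (π : X → Y) : ℝ :=
  sSup {d : ℝ | ∃ 𝒰 : Set (Set X), IsOpenCover 𝒰 ∧ d = DeU F 𝒰 π}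

/-- `D̲_p(X, G | π)`. -/
noncomputable def DpLSys {G X Y : Type*} [Group G] [TopologicalSpace X] [MulAction G X]
    (F : ℕ → Finset G) (π : X → Y) : ℝ :=
  sSup {d : ℝ | ∃ 𝒰 : Set (Set X), IsOpenCover 𝒰 ∧ d = DpL F 𝒰 π}

/-- The cover `{X ∖ cl B(x i, 1/k) : i}` associated with a tuple. -/
def ballCover {X : Type*} [MetricSpace X] {n : ℕ} (x : Fin n → X) (k : ℕ) : Set (Set X) :=
  {V | ∃ i : Fin n, V = (Metric.closedBall (x i) (1 / (k : ℝ)))ᶜ}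

/-- The relative entropy dimension `D̄(x₁, …, x_n | π)` of a tuple. -/
noncomputable def tupleDim {G X Y : Type*} [Group G] [MetricSpace X] [MulAction G X] {n : ℕ}
    (F : ℕ → Finset G) (x : Fin n → X) (π : X → Y) : ℝ :=
  limUnder atTop fun k : ℕ => DU F (ballCover x k) π

/-- The tuple lies on the diagonal. -/
def IsDiag {X : Type*} {n : ℕ} (x : Fin n → X) : Prop := ∀ i j, x i = x j

/-- The `n`-th relative dimension set `𝒟_n(X, G | π)`. -/
noncomputable def dimSet {G X Z : Type*} [Group G] [MetricSpace X] [MulAction G X]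
    (F : ℕ → Finset G) (π : X → Z) (n : ℕ) : Set ℝ :=
  {α : ℝ | 0 ≤ α ∧ ∃ x : Fin n → X, ¬ IsDiag x ∧ tupleDim F x π = α}

/-- The translated cover `g𝒰`. -/
def smulCover {G X : Type*} [SMul G X] (g : G) (𝒰 : Set (Set X)) : Set (Set X) :=
  (fun U => (fun x => g • x) '' U) '' 𝒰

/-- The join `𝒰 ∨ 𝒱` of two covers. -/
def covJoin {X : Type*} (𝒰 𝒱 : Set (Set X)) : Set (Set X) :=
  {W | ∃ U ∈ 𝒰, ∃ V ∈ 𝒱, W = U ∩ V}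

/-- A standard cover: two non-dense open sets covering `X`. -/
def IsStandardCover {X : Type*} [TopologicalSpace X] (𝒲 : Set (Set X)) : Prop :=
  ∃ U V : Set X, 𝒲 = {U, V} ∧ IsOpen U ∧ IsOpen V ∧ U ∪ V = Set.univ ∧
    ¬ Dense U ∧ ¬ Dense V


namespace Stmt18

open Set Filter

variable {G X : Type*} [Group G] [MulAction G X]

lemma mem_dynJoin {B : Finset G} {𝒰 : Set (Set X)} (f : G → Set X)
    (hf : ∀ g ∈ B, f g ∈ 𝒰) : (⋂ g ∈ B, (fun x => g • x) ⁻¹' f g) ∈ dynJoin B 𝒰 :=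
  ⟨f, hf, rfl⟩

lemma dynJoin_finite {B : Finset G} {𝒰 : Set (Set X)} (h : 𝒰.Finite) :
    (dynJoin B 𝒰).Finite := by
  classical
  induction B using Finset.induction with
  | empty =>
    apply (Set.finite_singleton (Set.univ : Set X)).subset
    rintro W ⟨f, hf, rfl⟩
    simp
  | @insert a B ha ih =>
    apply (Set.Finite.image2 (· ∩ ·) (h.image (fun U => (fun x : X => a • x) ⁻¹' U)) ih).subset
    rintro W ⟨f, hf, rfl⟩
    refine ⟨(fun x : X => a • x) ⁻¹' f a, ⟨f a, hf a (Finset.mem_insert_self a B), rfl⟩,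
      ⋂ g ∈ B, (fun x => g • x) ⁻¹' f g, ⟨f, fun g hg => hf g (Finset.mem_insert_of_mem hg), rfl⟩, ?_⟩
    rw [Finset.set_biInter_insert]

lemma dynJoin_covers {B : Finset G} {𝒰 : Set (Set X)} (h : ⋃₀ 𝒰 = Set.univ) (x : X) :
    ∃ W ∈ dynJoin B 𝒰, x ∈ W := by
  classical
  have hU : ∀ g : G, ∃ U ∈ 𝒰, g • x ∈ U := by
    intro g
    have : g • x ∈ ⋃₀ 𝒰 := h ▸ Set.mem_univ _
    exact this
  choose f hf hxf using hU
  exact ⟨_, mem_dynJoin f (fun g _ => hf g), Set.mem_iInter₂.2 fun g _ => hxf g⟩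

lemma dynJoin_refines {B : Finset G} {𝒰 𝒱 : Set (Set X)}
    (href : ∀ U ∈ 𝒰, ∃ V ∈ 𝒱, U ⊆ V) :
    ∀ W ∈ dynJoin B 𝒰, ∃ W' ∈ dynJoin B 𝒱, W ⊆ W' := by
  classical
  rintro W ⟨f, hf, rfl⟩
  have : ∀ g : G, ∃ V : Set X, (g ∈ B → (V ∈ 𝒱 ∧ f g ⊆ V)) := by
    intro g
    by_cases hg : g ∈ B
    · obtain ⟨V, hV, hsub⟩ := href (f g) (hf g hg)
      exact ⟨V, fun _ => ⟨hV, hsub⟩⟩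
    · exact ⟨∅, fun h => absurd h hg⟩
  choose f' hf' using this
  refine ⟨⋂ g ∈ B, (fun x => g • x) ⁻¹' f' g, mem_dynJoin f' (fun g hg => (hf' g hg).1), ?_⟩
  exact Set.iInter₂_mono fun g hg => Set.preimage_mono (hf' g hg).2

/-! coverNum basics -/

lemma coverNum_le_card {X' : Type*} {𝒜 : Set (Set X')} {E : Set X'} (t : Finset (Set X'))
    (ht : ↑t ⊆ 𝒜) (hcov : E ⊆ ⋃₀ (t : Set (Set X'))) : coverNum 𝒜 E ≤ t.card :=
  Nat.sInf_le ⟨t, ht, rfl, hcov⟩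

lemma coverNum_spec {X' : Type*} {𝒜 : Set (Set X')} {E : Set X'} (h𝒜 : 𝒜.Finite)
    (hcov : E ⊆ ⋃₀ 𝒜) :
    ∃ t : Finset (Set X'), ↑t ⊆ 𝒜 ∧ t.card = coverNum 𝒜 E ∧ E ⊆ ⋃₀ (t : Set (Set X')) := by
  classical
  have hne : {k | ∃ t : Finset (Set X'), ↑t ⊆ 𝒜 ∧ t.card = k ∧ E ⊆ ⋃₀ (t : Set (Set X'))}.Nonempty := by
    refine ⟨h𝒜.toFinset.card, h𝒜.toFinset, ?_, rfl, ?_⟩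
    · simp
    · simpa using hcov
  obtain ⟨t, ht, hcard, hc⟩ := Nat.sInf_mem hne
  exact ⟨t, ht, hcard, hc⟩

lemma one_le_coverNum {X' : Type*} {𝒜 : Set (Set X')} {E : Set X'} (h𝒜 : 𝒜.Finite)
    (hcov : E ⊆ ⋃₀ 𝒜) (hE : E.Nonempty) : 1 ≤ coverNum 𝒜 E := by
  obtain ⟨t, _, hcard, hc⟩ := coverNum_spec h𝒜 hcov
  rcases Finset.eq_empty_or_nonempty t with rfl | hne
  · obtain ⟨e, he⟩ := hE
    simpa using hc he
  · rw [← hcard]; exact hne.card_pos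

end Stmt18

namespace Stmt18

open Set Filter

variable {G X : Type*} [Group G] [MulAction G X]

lemma sUnion_dynJoin_univ {B : Finset G} {𝒰 : Set (Set X)} (h : ⋃₀ 𝒰 = Set.univ) :
    ⋃₀ (dynJoin B 𝒰) = Set.univ := by
  ext x
  simp only [Set.mem_univ, iff_true]
  obtain ⟨W, hW, hx⟩ := dynJoin_covers (B := B) h x
  exact ⟨W, hW, hx⟩

lemma coverNum_le_of_refine {X' : Type*} {𝒜 ℬ : Set (Set X')} {E : Set X'}
    (h𝒜 : 𝒜.Finite) (hAcov : E ⊆ ⋃₀ 𝒜)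
    (href : ∀ A ∈ 𝒜, ∃ B' ∈ ℬ, A ⊆ B') : coverNum ℬ E ≤ coverNum 𝒜 E := by
  classical
  obtain ⟨t, ht, hcard, hc⟩ := coverNum_spec h𝒜 hAcov
  have hρ : ∀ A : Set X', ∃ B' : Set X', A ∈ 𝒜 → (B' ∈ ℬ ∧ A ⊆ B') := by
    intro A
    by_cases hA : A ∈ 𝒜
    · obtain ⟨B', hB', hsub⟩ := href A hA
      exact ⟨B', fun _ => ⟨hB', hsub⟩⟩
    · exact ⟨∅, fun h => absurd h hA⟩
  choose ρ hρ using hρ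
  have hsub : ↑(t.image ρ) ⊆ ℬ := by
    intro B' hB'
    simp only [Finset.coe_image, Set.mem_image, Finset.mem_coe] at hB'
    obtain ⟨A, hA, rfl⟩ := hB'
    exact (hρ A (ht hA)).1
  have hcov' : E ⊆ ⋃₀ ((t.image ρ : Finset (Set X')) : Set (Set X')) := by
    intro e he
    obtain ⟨A, hA, heA⟩ := hc he
    exact ⟨ρ A, by simpa using ⟨A, hA, rfl⟩, (hρ A (ht (by exact_mod_cast hA))).2 heA⟩
  calc coverNum ℬ E ≤ (t.image ρ).card := coverNum_le_card _ hsub hcov'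
    _ ≤ t.card := Finset.card_image_le
    _ = coverNum 𝒜 E := hcard

lemma coverNum_le_finite_card {X' : Type*} {𝒜 : Set (Set X')} {E : Set X'}
    (h𝒜 : 𝒜.Finite) (hcov : ⋃₀ 𝒜 = Set.univ) : coverNum 𝒜 E ≤ h𝒜.toFinset.card := by
  refine coverNum_le_card h𝒜.toFinset (by simp) ?_
  rw [Set.Finite.coe_toFinset, hcov]
  exact Set.subset_univ E

lemma bddAbove_cn {X' Z' : Type*} {𝒜 : Set (Set X')} (π : X' → Z')
    (h𝒜 : 𝒜.Finite) (hcov : ⋃₀ 𝒜 = Set.univ) :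
    BddAbove (Set.range fun z => coverNum 𝒜 (π ⁻¹' {z})) := by
  refine ⟨h𝒜.toFinset.card, ?_⟩
  rintro _ ⟨z, rfl⟩
  exact coverNum_le_finite_card h𝒜 hcov

lemma cn_le_NRel {X' Z' : Type*} {𝒜 : Set (Set X')} (π : X' → Z')
    (h𝒜 : 𝒜.Finite) (hcov : ⋃₀ 𝒜 = Set.univ) (z : Z') :
    coverNum 𝒜 (π ⁻¹' {z}) ≤ NRel 𝒜 π :=
  le_ciSup (bddAbove_cn π h𝒜 hcov) z

lemma NRel_le {X' Z' : Type*} {𝒜 : Set (Set X')} {π : X' → Z'} {c : ℕ}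
    (h : ∀ z, coverNum 𝒜 (π ⁻¹' {z}) ≤ c) : NRel 𝒜 π ≤ c :=
  ciSup_le' h

/-- monotonicity of `NRel ∘ dynJoin` under refinement. -/
lemma NRel_dynJoin_mono {Z' : Type*} {B : Finset G} {𝒰 𝒱 : Set (Set X)} (π : X → Z')
    (h𝒰 : 𝒰.Finite) (hcov : ⋃₀ 𝒰 = Set.univ)
    (href : ∀ U ∈ 𝒰, ∃ V ∈ 𝒱, U ⊆ V) :
    NRel (dynJoin B 𝒱) π ≤ NRel (dynJoin B 𝒰) π := by
  refine NRel_le fun z => ?_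
  refine le_trans ?_ (cn_le_NRel π (dynJoin_finite h𝒰) (sUnion_dynJoin_univ hcov) z)
  exact coverNum_le_of_refine (dynJoin_finite h𝒰)
    (by rw [sUnion_dynJoin_univ hcov]; exact Set.subset_univ _)
    (dynJoin_refines href)

lemma one_le_NRel {X' Z' : Type*} [Nonempty Z'] {𝒜 : Set (Set X')} {π : X' → Z'}
    (hsurj : Function.Surjective π) (h𝒜 : 𝒜.Finite) (hcov : ⋃₀ 𝒜 = Set.univ) :
    1 ≤ NRel 𝒜 π := by
  obtain ⟨z⟩ := ‹Nonempty Z'›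
  refine le_trans ?_ (cn_le_NRel π h𝒜 hcov z)
  refine one_le_coverNum h𝒜 (by rw [hcov]; exact Set.subset_univ _) ?_
  obtain ⟨x, hx⟩ := hsurj z
  exact ⟨x, by simp [hx]⟩

end Stmt18

namespace Stmt18

open Set Filter

variable {G X Y : Type*} [Group G] [MulAction G X] [MulAction G Y]

lemma dynJoin_preimage {B : Finset G} (π : X → Y) (hequi : ∀ (g : G) (x : X), π (g • x) = g • π x)
    (𝒱 : Set (Set Y)) :
    dynJoin B ((Set.preimage π) '' 𝒱) = (Set.preimage π) '' dynJoin B 𝒱 := by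
  classical
  have key : ∀ (g : G) (V : Set Y),
      (fun x : X => g • x) ⁻¹' (π ⁻¹' V) = π ⁻¹' ((fun y : Y => g • y) ⁻¹' V) := by
    intro g V
    ext x
    simp [hequi g x]
  ext W
  constructor
  · rintro ⟨f, hf, rfl⟩
    have : ∀ g : G, ∃ V : Set Y, g ∈ B → (V ∈ 𝒱 ∧ f g = π ⁻¹' V) := by
      intro g
      by_cases hg : g ∈ B
      · obtain ⟨V, hV, hVf⟩ := hf g hg
        exact ⟨V, fun _ => ⟨hV, hVf.symm⟩⟩
      · exact ⟨∅, fun h => absurd h hg⟩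
    choose v hv using this
    refine ⟨⋂ g ∈ B, (fun y => g • y) ⁻¹' v g, ⟨v, fun g hg => (hv g hg).1, rfl⟩, ?_⟩
    rw [Set.preimage_iInter₂]
    exact Set.iInter₂_congr fun g hg => by rw [← key, (hv g hg).2]
  · rintro ⟨W', ⟨v, hv, rfl⟩, rfl⟩
    refine ⟨fun g => π ⁻¹' v g, fun g hg => ⟨v g, hv g hg, rfl⟩, ?_⟩
    rw [Set.preimage_iInter₂]
    exact Set.iInter₂_congr fun g hg => (key g (v g)).symm

lemma coverNum_preimage {𝒜 : Set (Set Y)} {E : Set Y} (π : X → Y)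
    (hsurj : Function.Surjective π) :
    coverNum ((Set.preimage π) '' 𝒜) (π ⁻¹' E) = coverNum 𝒜 E := by
  classical
  have hinj : Function.Injective (Set.preimage π) := hsurj.preimage_injective
  unfold coverNum
  congr 1
  ext k
  constructor
  · rintro ⟨t', ht', hcard, hc⟩
    -- construct Y-side finset
    have hσ : ∀ W : Set X, ∃ A : Set Y, W ∈ (Set.preimage π) '' 𝒜 → (A ∈ 𝒜 ∧ π ⁻¹' A = W) := by
      intro W
      by_cases hW : W ∈ (Set.preimage π) '' 𝒜
      · obtain ⟨A, hA, rfl⟩ := hW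
        exact ⟨A, fun _ => ⟨hA, rfl⟩⟩
      · exact ⟨∅, fun h => absurd h hW⟩
    choose σ hσ using hσ
    refine ⟨t'.image σ, ?_, ?_, ?_⟩
    · intro A hA
      simp only [Finset.coe_image, Set.mem_image, Finset.mem_coe] at hA
      obtain ⟨W, hW, rfl⟩ := hA
      exact (hσ W (ht' hW)).1
    · rw [Finset.card_image_of_injOn, hcard]
      intro W₁ h₁ W₂ h₂ he
      have e₁ := (hσ W₁ (ht' h₁)).2
      have e₂ := (hσ W₂ (ht' h₂)).2
      rw [← e₁, ← e₂, he]
    · intro e he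
      obtain ⟨x, rfl⟩ := hsurj e
      obtain ⟨W, hW, hxW⟩ := hc (by simpa using he)
      refine ⟨σ W, by simpa using ⟨W, hW, rfl⟩, ?_⟩
      have := (hσ W (ht' (by exact_mod_cast hW))).2
      rw [← this] at hxW
      exact hxW
  · rintro ⟨t, ht, hcard, hc⟩
    refine ⟨t.image (Set.preimage π), ?_, ?_, ?_⟩
    · intro W hW
      simp only [Finset.coe_image, Set.mem_image, Finset.mem_coe] at hW
      obtain ⟨A, hA, rfl⟩ := hW
      exact ⟨A, ht hA, rfl⟩
    · rw [Finset.card_image_of_injective _ hinj, hcard]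
    · intro x hx
      obtain ⟨A, hA, hxA⟩ := hc hx
      exact ⟨π ⁻¹' A, by simpa using ⟨A, hA, rfl⟩, hxA⟩

lemma NRel_pullback {Z : Type*} {B : Finset G} (π : X → Y) (πX : X → Z) (πY : Y → Z)
    (hsurj : Function.Surjective π) (hequi : ∀ (g : G) (x : X), π (g • x) = g • π x)
    (hcomm : πY ∘ π = πX) (𝒱 : Set (Set Y)) :
    NRel (dynJoin B ((Set.preimage π) '' 𝒱)) πX = NRel (dynJoin B 𝒱) πY := by
  unfold NRel
  refine iSup_congr fun z => ?_
  have hfib : πX ⁻¹' {z} = π ⁻¹' (πY ⁻¹' {z}) := by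
    rw [← hcomm]; rfl
  rw [hfib, dynJoin_preimage π hequi, coverNum_preimage π hsurj]

end Stmt18

namespace Stmt18

open Set Filter

variable {G X : Type*} [Group G] [MulAction G X]

/-- Binary splitting lemma. -/
lemma coverNum_insert_inter_le {B : Finset G} {𝒮 : Set (Set X)} {U₁ U₂ : Set X} {E : Set X}
    (h𝒮 : 𝒮.Finite)
    (hcov₁ : ⋃₀ (insert U₁ 𝒮) = Set.univ) (hcov₂ : ⋃₀ (insert U₂ 𝒮) = Set.univ) :
    coverNum (dynJoin B (insert (U₁ ∩ U₂) 𝒮)) E ≤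
      coverNum (dynJoin B (insert U₁ 𝒮)) E * coverNum (dynJoin B (insert U₂ 𝒮)) E := by
  classical
  obtain ⟨t₁, ht₁, hcard₁, hc₁⟩ := coverNum_spec (E := E)
    (dynJoin_finite (B := B) (h𝒮.insert U₁))
    (by rw [sUnion_dynJoin_univ hcov₁]; exact Set.subset_univ _)
  obtain ⟨t₂, ht₂, hcard₂, hc₂⟩ := coverNum_spec (E := E)
    (dynJoin_finite (B := B) (h𝒮.insert U₂))
    (by rw [sUnion_dynJoin_univ hcov₂]; exact Set.subset_univ _)
  -- combination of two join members
  have hcomb : ∀ W₁ W₂ : Set X, ∃ W : Set X,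
      (W₁ ∈ dynJoin B (insert U₁ 𝒮) ∧ W₂ ∈ dynJoin B (insert U₂ 𝒮)) →
      (W ∈ dynJoin B (insert (U₁ ∩ U₂) 𝒮) ∧ W₁ ∩ W₂ ⊆ W) := by
    intro W₁ W₂
    by_cases h : W₁ ∈ dynJoin B (insert U₁ 𝒮) ∧ W₂ ∈ dynJoin B (insert U₂ 𝒮)
    · obtain ⟨⟨f₁, hf₁, rfl⟩, ⟨f₂, hf₂, rfl⟩⟩ := h
      have hsel : ∀ g : G, ∃ S : Set X, g ∈ B →
          (S ∈ insert (U₁ ∩ U₂) 𝒮 ∧ f₁ g ∩ f₂ g ⊆ S) := by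
        intro g
        by_cases hg : g ∈ B
        · rcases hf₁ g hg with h1 | h1
          · rcases hf₂ g hg with h2 | h2
            · exact ⟨U₁ ∩ U₂, fun _ => ⟨Set.mem_insert _ _,
                Set.inter_subset_inter (h1 ▸ le_refl _) (h2 ▸ le_refl _)⟩⟩
            · exact ⟨f₂ g, fun _ => ⟨Set.mem_insert_of_mem _ h2, Set.inter_subset_right⟩⟩
          · exact ⟨f₁ g, fun _ => ⟨Set.mem_insert_of_mem _ h1, Set.inter_subset_left⟩⟩
        · exact ⟨∅, fun h => absurd h hg⟩
      choose S hS using hsel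
      refine ⟨⋂ g ∈ B, (fun x => g • x) ⁻¹' S g, fun _ =>
        ⟨mem_dynJoin S (fun g hg => (hS g hg).1), ?_⟩⟩
      intro z hz
      simp only [Set.mem_inter_iff, Set.mem_iInter, Set.mem_preimage] at hz ⊢
      intro g hg
      exact (hS g hg).2 ⟨hz.1 g hg, hz.2 g hg⟩
    · exact ⟨∅, fun hh => absurd hh h⟩
  choose κ hκ using hcomb
  set t : Finset (Set X) := (t₁ ×ˢ t₂).image (fun p => κ p.1 p.2) with ht_def
  have htsub : ↑t ⊆ dynJoin B (insert (U₁ ∩ U₂) 𝒮) := by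
    intro W hW
    simp only [ht_def, Finset.coe_image, Set.mem_image, Finset.mem_coe, Finset.mem_product] at hW
    obtain ⟨⟨W₁, W₂⟩, ⟨h1, h2⟩, rfl⟩ := hW
    exact (hκ W₁ W₂ ⟨ht₁ h1, ht₂ h2⟩).1
  have htcov : E ⊆ ⋃₀ (t : Set (Set X)) := by
    intro e he
    obtain ⟨W₁, hW₁, he₁⟩ := hc₁ he
    obtain ⟨W₂, hW₂, he₂⟩ := hc₂ he
    refine ⟨κ W₁ W₂, ?_, (hκ W₁ W₂ ⟨ht₁ (by exact_mod_cast hW₁), ht₂ (by exact_mod_cast hW₂)⟩).2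
      ⟨he₁, he₂⟩⟩
    simp only [ht_def, Finset.coe_image, Set.mem_image, Finset.mem_coe, Finset.mem_product]
    exact ⟨(W₁, W₂), ⟨by exact_mod_cast hW₁, by exact_mod_cast hW₂⟩, rfl⟩
  calc coverNum (dynJoin B (insert (U₁ ∩ U₂) 𝒮)) E ≤ t.card := coverNum_le_card t htsub htcov
    _ ≤ (t₁ ×ˢ t₂).card := Finset.card_image_le
    _ = t₁.card * t₂.card := Finset.card_product t₁ t₂
    _ = _ := by rw [hcard₁, hcard₂]

end Stmt18

namespace Stmt18

open Set Filter

variable {G X : Type*} [Group G] [MulAction G X]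

lemma coverNum_sInter_le_prod_aux {ι : Type*} [Fintype ι] [DecidableEq ι] {B : Finset G}
    (N : ℕ) :
    ∀ (J : ι → Finset (Set X)), (∑ i, (J i).card) ≤ N → (∀ i, (J i).Nonempty) →
    (⋃₀ (Set.range fun i => ⋂₀ ((J i : Set (Set X)))) = Set.univ) → ∀ E : Set X,
    coverNum (dynJoin B (Set.range fun i => ⋂₀ ((J i : Set (Set X))))) E ≤
      ∏ s ∈ Fintype.piFinset J, coverNum (dynJoin B (Set.range s)) E := by
  classical
  induction N with
  | zero =>
    intro J hN hne hcov E
    -- all cards are ≥ 1, so ι is empty; handle via the singleton case below by contradiction: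
    have hall : ∀ i, (J i).card = 1 := by
      intro i
      have h1 : 1 ≤ (J i).card := (hne i).card_pos
      have : (J i).card ≤ ∑ j, (J j).card := Finset.single_le_sum
        (f := fun j => (J j).card) (fun j _ => Nat.zero_le _) (Finset.mem_univ i)
      omega
    -- singleton case
    choose a ha using fun i => Finset.card_eq_one.1 (hall i)
    have hs₀ : Fintype.piFinset J = {a} := by
      ext s
      simp only [Fintype.mem_piFinset, Finset.mem_singleton]
      constructor
      · intro h
        funext i
        have := h i
        rw [ha i, Finset.mem_singleton] at this
        exact this
      · rintro rfl i
        rw [ha i]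
        exact Finset.mem_singleton_self _
    have hr : (fun i => ⋂₀ ((J i : Set (Set X)))) = a := by
      funext i
      rw [ha i]
      simp
    rw [hs₀, hr, Finset.prod_singleton]
  | succ N ih =>
    intro J hN hne hcov E
    by_cases hall : ∀ i, (J i).card = 1
    · choose a ha using fun i => Finset.card_eq_one.1 (hall i)
      have hs₀ : Fintype.piFinset J = {a} := by
        ext s
        simp only [Fintype.mem_piFinset, Finset.mem_singleton]
        constructor
        · intro h
          funext i
          have := h i
          rw [ha i, Finset.mem_singleton] at this
          exact this
        · rintro rfl i
          rw [ha i]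
          exact Finset.mem_singleton_self _
      have hr : (fun i => ⋂₀ ((J i : Set (Set X)))) = a := by
        funext i
        rw [ha i]
        simp
      rw [hs₀, hr, Finset.prod_singleton]
    · push_neg at hall
      obtain ⟨i₀, hi₀⟩ := hall
      have hcard2 : 2 ≤ (J i₀).card := by
        have := (hne i₀).card_pos
        omega
      obtain ⟨a, ha⟩ := hne i₀
      set J' : Finset (Set X) := (J i₀).erase a with hJ'def
      have hJ'ne : J'.Nonempty := by
        rw [← Finset.card_pos, hJ'def, Finset.card_erase_of_mem ha]
        omega
      set Ja := Function.update J i₀ ({a} : Finset (Set X)) with hJadef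
      set Jb := Function.update J i₀ J' with hJbdef
      set 𝒮 : Set (Set X) := (fun i => ⋂₀ ((J i : Set (Set X)))) '' {i | i ≠ i₀} with h𝒮def
      have h𝒮fin : 𝒮.Finite := (Set.toFinite _)
      have hkey : ⋂₀ ((J i₀ : Set (Set X))) = a ∩ ⋂₀ (J' : Set (Set X)) := by
        conv_lhs => rw [← Finset.insert_erase ha]
        rw [Finset.coe_insert, Set.sInter_insert]
      have hR : (Set.range fun i => ⋂₀ ((J i : Set (Set X))))
          = insert (⋂₀ ((J i₀ : Set (Set X)))) 𝒮 := by
        ext W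
        simp only [Set.mem_range, Set.mem_insert_iff, h𝒮def, Set.mem_image, Set.mem_setOf_eq]
        constructor
        · rintro ⟨i, rfl⟩
          rcases eq_or_ne i i₀ with rfl | hi
          · exact Or.inl rfl
          · exact Or.inr ⟨i, hi, rfl⟩
        · rintro (rfl | ⟨i, _, rfl⟩) <;> exact ⟨_, rfl⟩
      have hRa : (Set.range fun i => ⋂₀ ((Ja i : Set (Set X)))) = insert a 𝒮 := by
        ext W
        simp only [Set.mem_range, Set.mem_insert_iff, h𝒮def, Set.mem_image, Set.mem_setOf_eq]
        constructor
        · rintro ⟨i, rfl⟩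
          rcases eq_or_ne i i₀ with rfl | hi
          · left; rw [hJadef, Function.update_self]; simp
          · right; exact ⟨i, hi, by rw [hJadef, Function.update_of_ne hi]⟩
        · rintro (rfl | ⟨i, hi, rfl⟩)
          · exact ⟨i₀, by rw [hJadef, Function.update_self]; simp⟩
          · exact ⟨i, by rw [hJadef, Function.update_of_ne hi]⟩
      have hRb : (Set.range fun i => ⋂₀ ((Jb i : Set (Set X)))) = insert (⋂₀ (J' : Set (Set X))) 𝒮 := by
        ext W
        simp only [Set.mem_range, Set.mem_insert_iff, h𝒮def, Set.mem_image, Set.mem_setOf_eq]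
        constructor
        · rintro ⟨i, rfl⟩
          rcases eq_or_ne i i₀ with rfl | hi
          · left; rw [hJbdef, Function.update_self]
          · right; exact ⟨i, hi, by rw [hJbdef, Function.update_of_ne hi]⟩
        · rintro (rfl | ⟨i, hi, rfl⟩)
          · exact ⟨i₀, by rw [hJbdef, Function.update_self]⟩
          · exact ⟨i, by rw [hJbdef, Function.update_of_ne hi]⟩
      -- coverage statements
      rw [hR] at hcov
      rw [Set.sUnion_insert] at hcov
      have hcova : ⋃₀ (insert a 𝒮) = Set.univ := by
        rw [Set.sUnion_insert]
        apply Set.eq_univ_of_univ_subset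
        rw [← hcov]
        exact Set.union_subset_union_left _ (Set.sInter_subset_of_mem (by exact_mod_cast ha))
      have hcovb : ⋃₀ (insert (⋂₀ (J' : Set (Set X))) 𝒮) = Set.univ := by
        rw [Set.sUnion_insert]
        apply Set.eq_univ_of_univ_subset
        rw [← hcov]
        refine Set.union_subset_union_left _ (Set.sInter_subset_sInter ?_)
        exact_mod_cast Finset.erase_subset a (J i₀)
      -- sums
      have htot : (J i₀).card + ∑ i ∈ Finset.univ.erase i₀, (J i).card = ∑ i, (J i).card :=
        Finset.add_sum_erase _ (fun i => (J i).card) (Finset.mem_univ i₀)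
      have herase : ∀ (K : ι → Finset (Set X)), (∀ i ∈ Finset.univ.erase i₀, K i = J i) →
          (K i₀).card + ∑ i ∈ Finset.univ.erase i₀, (J i).card = ∑ i, (K i).card := by
        intro K hK
        rw [← Finset.add_sum_erase _ (fun i => (K i).card) (Finset.mem_univ i₀)]
        congr 1
        exact Finset.sum_congr rfl fun i hi => by rw [hK i hi]
      have hJa_erase : ∀ i ∈ Finset.univ.erase i₀, Ja i = J i := fun i hi => by
        rw [hJadef, Function.update_of_ne (Finset.mem_erase.1 hi).1]
      have hJb_erase : ∀ i ∈ Finset.univ.erase i₀, Jb i = J i := fun i hi => by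
        rw [hJbdef, Function.update_of_ne (Finset.mem_erase.1 hi).1]
      have hsuma : ∑ i, (Ja i).card ≤ N := by
        rw [← herase Ja hJa_erase, hJadef, Function.update_self, Finset.card_singleton]
        omega
      have hsumb : ∑ i, (Jb i).card ≤ N := by
        rw [← herase Jb hJb_erase, hJbdef, Function.update_self, hJ'def,
          Finset.card_erase_of_mem ha]
        omega
      have hnea : ∀ i, (Ja i).Nonempty := by
        intro i
        rcases eq_or_ne i i₀ with rfl | hi
        · rw [hJadef, Function.update_self]; exact Finset.singleton_nonempty a
        · rw [hJadef, Function.update_of_ne hi]; exact hne i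
      have hneb : ∀ i, (Jb i).Nonempty := by
        intro i
        rcases eq_or_ne i i₀ with rfl | hi
        · rw [hJbdef, Function.update_self]; exact hJ'ne
        · rw [hJbdef, Function.update_of_ne hi]; exact hne i
      have iha := ih Ja hsuma hnea (by rw [hRa]; exact hcova) E
      have ihb := ih Jb hsumb hneb (by rw [hRb]; exact hcovb) E
      -- the union of the two piFinsets
      have hunion : Fintype.piFinset Ja ∪ Fintype.piFinset Jb = Fintype.piFinset J := by
        ext s
        simp only [Finset.mem_union, Fintype.mem_piFinset]
        constructor
        · rintro (h | h) i
          · rcases eq_or_ne i i₀ with rfl | hi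
            · have := h i
              rw [hJadef, Function.update_self, Finset.mem_singleton] at this
              rw [this]; exact ha
            · have := h i
              rwa [hJadef, Function.update_of_ne hi] at this
          · rcases eq_or_ne i i₀ with rfl | hi
            · have := h i
              rw [hJbdef, Function.update_self, hJ'def] at this
              exact Finset.mem_of_mem_erase this
            · have := h i
              rwa [hJbdef, Function.update_of_ne hi] at this
        · intro h
          rcases eq_or_ne (s i₀) a with hsa | hsa
          · left
            intro i
            rcases eq_or_ne i i₀ with rfl | hi
            · rw [hJadef, Function.update_self, Finset.mem_singleton]; exact hsa
            · rw [hJadef, Function.update_of_ne hi]; exact h i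
          · right
            intro i
            rcases eq_or_ne i i₀ with rfl | hi
            · rw [hJbdef, Function.update_self, hJ'def, Finset.mem_erase]
              exact ⟨hsa, h i⟩
            · rw [hJbdef, Function.update_of_ne hi]; exact h i
      have hdisj : Disjoint (Fintype.piFinset Ja) (Fintype.piFinset Jb) := by
        rw [Finset.disjoint_left]
        intro s hsa hsb
        have h1 := (Fintype.mem_piFinset.1 hsa) i₀
        have h2 := (Fintype.mem_piFinset.1 hsb) i₀
        rw [hJadef, Function.update_self, Finset.mem_singleton] at h1
        rw [hJbdef, Function.update_self, hJ'def, Finset.mem_erase] at h2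
        exact h2.1 h1
      calc coverNum (dynJoin B (Set.range fun i => ⋂₀ ((J i : Set (Set X))))) E
          = coverNum (dynJoin B (insert (a ∩ ⋂₀ (J' : Set (Set X))) 𝒮)) E := by rw [hR, hkey]
        _ ≤ coverNum (dynJoin B (insert a 𝒮)) E * coverNum (dynJoin B (insert (⋂₀ (J' : Set (Set X))) 𝒮)) E :=
            coverNum_insert_inter_le h𝒮fin hcova hcovb
        _ = coverNum (dynJoin B (Set.range fun i => ⋂₀ ((Ja i : Set (Set X))))) E *
            coverNum (dynJoin B (Set.range fun i => ⋂₀ ((Jb i : Set (Set X))))) E := by rw [hRa, hRb]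
        _ ≤ (∏ s ∈ Fintype.piFinset Ja, coverNum (dynJoin B (Set.range s)) E) *
            (∏ s ∈ Fintype.piFinset Jb, coverNum (dynJoin B (Set.range s)) E) :=
            Nat.mul_le_mul iha ihb
        _ = ∏ s ∈ Fintype.piFinset J, coverNum (dynJoin B (Set.range s)) E := by
            rw [← hunion, Finset.prod_union hdisj]

lemma coverNum_sInter_le_prod {ι : Type*} [Fintype ι] [DecidableEq ι] {B : Finset G}
    (J : ι → Finset (Set X)) (hne : ∀ i, (J i).Nonempty)
    (hcov : ⋃₀ (Set.range fun i => ⋂₀ ((J i : Set (Set X)))) = Set.univ) (E : Set X) :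
    coverNum (dynJoin B (Set.range fun i => ⋂₀ ((J i : Set (Set X))))) E ≤
      ∏ s ∈ Fintype.piFinset J, coverNum (dynJoin B (Set.range s)) E :=
  coverNum_sInter_le_prod_aux _ J le_rfl hne hcov E

end Stmt18

namespace Stmt18

open Set Filter

variable {G X : Type*} [Group G] [MulAction G X]

lemma log_nat_nonneg (n : ℕ) : 0 ≤ Real.log n := by
  rcases Nat.eq_zero_or_pos n with rfl | h
  · simp
  · exact Real.log_nonneg (by exact_mod_cast h)

lemma log_nat_mono {a b : ℕ} (h : a ≤ b) : Real.log a ≤ Real.log b := by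
  rcases Nat.eq_zero_or_pos a with rfl | ha
  · simpa using log_nat_nonneg b
  · exact Real.log_le_log (by exact_mod_cast ha) (by exact_mod_cast h)

/-- The set of exponents where the relative upper entropy dimension vanishes. -/
def Sset {Z : Type*} (F : ℕ → Finset G) (𝒰 : Set (Set X)) (π : X → Z) : Set ℝ :=
  {α : ℝ | 0 ≤ α ∧ hRelU F 𝒰 π α = 0}

lemma DU_eq_sInf_Sset {Z : Type*} (F : ℕ → Finset G) (𝒰 : Set (Set X)) (π : X → Z) :
    DU F 𝒰 π = sInf (Sset F 𝒰 π) := rfl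

lemma Sset_nonneg {Z : Type*} {F : ℕ → Finset G} {𝒰 : Set (Set X)} {π : X → Z} :
    ∀ a ∈ Sset F 𝒰 π, (0:ℝ) ≤ a := fun _ ha => ha.1

lemma DU_nonneg {Z : Type*} (F : ℕ → Finset G) (𝒰 : Set (Set X)) (π : X → Z) :
    0 ≤ DU F 𝒰 π := by
  rw [DU_eq_sInf_Sset]
  rcases Set.eq_empty_or_nonempty (Sset F 𝒰 π) with h | h
  · rw [h, Real.sInf_empty]
  · exact le_csInf h Sset_nonneg

lemma hRelU_anti {Z : Type*} {F : ℕ → Finset G} {𝒰 : Set (Set X)} {π : X → Z}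
    (hF : ∀ m, (F m).Nonempty) {α β : ℝ} (hαβ : α ≤ β) :
    hRelU F 𝒰 π β ≤ hRelU F 𝒰 π α := by
  refine Filter.limsup_le_limsup (Eventually.of_forall fun m => ?_)
  apply ENNReal.div_le_div_left
  apply ENNReal.ofReal_le_ofReal
  exact Real.rpow_le_rpow_of_exponent_le (by exact_mod_cast (hF m).card_pos) hαβ

lemma Sset_upward {Z : Type*} {F : ℕ → Finset G} {𝒰 : Set (Set X)} {π : X → Z}
    (hF : ∀ m, (F m).Nonempty) {α β : ℝ} (hα : α ∈ Sset F 𝒰 π) (hαβ : α ≤ β) :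
    β ∈ Sset F 𝒰 π :=
  ⟨hα.1.trans hαβ, le_antisymm (hα.2 ▸ hRelU_anti hF hαβ) zero_le⟩

/-- monotonicity of `hRelU` from `NRel` bounds (allowing different systems). -/
lemma hRelU_le_hRelU {G X₁ X₂ Z₁ Z₂ : Type*} [Group G] [MulAction G X₁] [MulAction G X₂]
    {F : ℕ → Finset G} {𝒰₁ : Set (Set X₁)} {𝒰₂ : Set (Set X₂)} {π₁ : X₁ → Z₁} {π₂ : X₂ → Z₂}
    (h : ∀ m, NRel (dynJoin (F m) 𝒰₁) π₁ ≤ NRel (dynJoin (F m) 𝒰₂) π₂) (α : ℝ) :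
    hRelU F 𝒰₁ π₁ α ≤ hRelU F 𝒰₂ π₂ α := by
  refine Filter.limsup_le_limsup (Eventually.of_forall fun m => ?_)
  apply ENNReal.div_le_div_right
  exact ENNReal.ofReal_le_ofReal (log_nat_mono (h m))

lemma Sset_subset_of_NRel {G X₁ X₂ Z₁ Z₂ : Type*} [Group G] [MulAction G X₁] [MulAction G X₂]
    {F : ℕ → Finset G} {𝒰₁ : Set (Set X₁)} {𝒰₂ : Set (Set X₂)} {π₁ : X₁ → Z₁} {π₂ : X₂ → Z₂}
    (h : ∀ m, NRel (dynJoin (F m) 𝒰₁) π₁ ≤ NRel (dynJoin (F m) 𝒰₂) π₂) :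
    Sset F 𝒰₂ π₂ ⊆ Sset F 𝒰₁ π₁ := by
  rintro α ⟨hα, hz⟩
  exact ⟨hα, le_antisymm (hz ▸ hRelU_le_hRelU h α) zero_le⟩

lemma log_le_sum_log {ι' : Type*} (T : Finset ι') (a : ℕ) (b : ι' → ℕ)
    (h : a ≤ ∏ s ∈ T, b s) : Real.log a ≤ ∑ s ∈ T, Real.log (b s) := by
  by_cases hb : ∀ s ∈ T, b s ≠ 0
  · calc Real.log (a : ℝ) ≤ Real.log ((∏ s ∈ T, b s : ℕ) : ℝ) := log_nat_mono h
      _ = Real.log ((∏ s ∈ T, (b s : ℝ))) := by rw [Nat.cast_prod]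
      _ = ∑ s ∈ T, Real.log (b s) := Real.log_prod (fun s hs => by
          exact_mod_cast hb s hs)
  · push_neg at hb
    obtain ⟨s₀, hs₀, hbz⟩ := hb
    have : ∏ s ∈ T, b s = 0 := Finset.prod_eq_zero hs₀ hbz
    rw [this] at h
    interval_cases a
    simpa using Finset.sum_nonneg fun s _ => log_nat_nonneg (b s)

/-- If `N(𝒞) ≤ ∏ N(𝒰ₛ)` and each `hRelU 𝒰ₛ = 0` then `hRelU 𝒞 = 0`. -/
lemma hRelU_zero_of_prod {Z : Type*} {ι' : Type*} {F : ℕ → Finset G} {π : X → Z}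
    {𝒞 : Set (Set X)} {T : Finset ι'} {𝒰 : ι' → Set (Set X)} {α : ℝ}
    (h : ∀ m, NRel (dynJoin (F m) 𝒞) π ≤ ∏ s ∈ T, NRel (dynJoin (F m) (𝒰 s)) π)
    (hz : ∀ s ∈ T, hRelU F (𝒰 s) π α = 0) :
    hRelU F 𝒞 π α = 0 := by
  set D : ℕ → ℝ≥0∞ := fun m => ENNReal.ofReal (((F m).card : ℝ) ^ α) with hD
  have hterm : ∀ s ∈ T, Tendsto (fun m =>
      ENNReal.ofReal (Real.log (NRel (dynJoin (F m) (𝒰 s)) π)) / D m) atTop (𝓝 0) := by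
    intro s hs
    have h1 : Filter.limsup (fun m =>
        ENNReal.ofReal (Real.log (NRel (dynJoin (F m) (𝒰 s)) π)) / D m) atTop = 0 := hz s hs
    have h2 : Filter.liminf (fun m =>
        ENNReal.ofReal (Real.log (NRel (dynJoin (F m) (𝒰 s)) π)) / D m) atTop = 0 := by
      refine le_antisymm (h1 ▸ liminf_le_limsup) zero_le
    exact tendsto_of_liminf_eq_limsup h2 h1
  have hsum : Tendsto (fun m => ∑ s ∈ T,
      ENNReal.ofReal (Real.log (NRel (dynJoin (F m) (𝒰 s)) π)) / D m) atTop (𝓝 0) := by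
    have := tendsto_finset_sum T hterm
    simpa using this
  have hle : ∀ m, ENNReal.ofReal (Real.log (NRel (dynJoin (F m) 𝒞) π)) / D m ≤
      ∑ s ∈ T, ENNReal.ofReal (Real.log (NRel (dynJoin (F m) (𝒰 s)) π)) / D m := by
    intro m
    have l1 : Real.log (NRel (dynJoin (F m) 𝒞) π) ≤
        ∑ s ∈ T, Real.log (NRel (dynJoin (F m) (𝒰 s)) π) := log_le_sum_log T _ _ (h m)
    calc ENNReal.ofReal (Real.log (NRel (dynJoin (F m) 𝒞) π)) / D m
        ≤ ENNReal.ofReal (∑ s ∈ T, Real.log (NRel (dynJoin (F m) (𝒰 s)) π)) / D m :=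
          ENNReal.div_le_div_right (ENNReal.ofReal_le_ofReal l1) _
      _ = (∑ s ∈ T, ENNReal.ofReal (Real.log (NRel (dynJoin (F m) (𝒰 s)) π))) / D m := by
          rw [ENNReal.ofReal_sum_of_nonneg (fun s _ => log_nat_nonneg _)]
      _ = ∑ s ∈ T, ENNReal.ofReal (Real.log (NRel (dynJoin (F m) (𝒰 s)) π)) / D m := by
          rw [div_eq_mul_inv, Finset.sum_mul]
          simp [div_eq_mul_inv]
  refine le_antisymm ?_ zero_le
  calc Filter.limsup (fun m => ENNReal.ofReal (Real.log (NRel (dynJoin (F m) 𝒞) π)) / D m) atTop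
      ≤ Filter.limsup (fun m => ∑ s ∈ T,
        ENNReal.ofReal (Real.log (NRel (dynJoin (F m) (𝒰 s)) π)) / D m) atTop :=
        Filter.limsup_le_limsup (Eventually.of_forall hle)
    _ = 0 := hsum.limsup_eq

/-- the pigeonhole principle for upward-closed sets. -/
lemma pigeonhole {ι' : Type*} {T : Finset ι'} (hTne : T.Nonempty) (A : ι' → Set ℝ) (Sy : Set ℝ)
    (hup : ∀ s ∈ T, ∀ a b : ℝ, a ∈ A s → a ≤ b → b ∈ A s)
    (hC : ∀ α : ℝ, (∀ s ∈ T, α ∈ A s) → α ∈ Sy) :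
    ∃ s ∈ T, A s ⊆ Sy := by
  classical
  by_contra hcon
  push_neg at hcon
  have : ∀ s : ι', ∃ a : ℝ, s ∈ T → (a ∈ A s ∧ a ∉ Sy) := by
    intro s
    by_cases hs : s ∈ T
    · obtain ⟨a, ha, hna⟩ := Set.not_subset.1 (hcon s hs)
      exact ⟨a, fun _ => ⟨ha, hna⟩⟩
    · exact ⟨0, fun h => absurd h hs⟩
  choose q hq using this
  obtain ⟨s₀, hs₀, hmax⟩ := T.exists_max_image q hTne
  have hmem : q s₀ ∈ Sy := hC (q s₀) fun s hs => hup s hs (q s) (q s₀) (hq s hs).1 (hmax s hs)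
  exact (hq s₀ hs₀).2 hmem

end Stmt18

namespace Stmt18

open Set Filter

variable {G X Y Z : Type*} [Group G] [MulAction G X] [MulAction G Y]

lemma ballCover_eq_range [MetricSpace X] {n : ℕ} (x : Fin n → X) (k : ℕ) :
    ballCover x k = Set.range (fun i => (Metric.closedBall (x i) (1/(k:ℝ)))ᶜ) := by
  ext V
  exact ⟨fun ⟨i, h⟩ => ⟨i, h.symm⟩, fun ⟨i, h⟩ => ⟨i, h.symm⟩⟩

lemma ballCover_finite [MetricSpace X] {n : ℕ} (x : Fin n → X) (k : ℕ) :
    (ballCover x k).Finite := by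
  rw [ballCover_eq_range]
  exact Set.finite_range _

lemma ballCover_covers [MetricSpace X] {n : ℕ} {x : Fin n → X} {k : ℕ} {i₀ j₀ : Fin n}
    (h : 1/(k:ℝ) + 1/(k:ℝ) < dist (x i₀) (x j₀)) : ⋃₀ ballCover x k = Set.univ := by
  apply Set.eq_univ_of_forall
  intro p
  have : p ∉ Metric.closedBall (x i₀) (1/(k:ℝ)) ∨ p ∉ Metric.closedBall (x j₀) (1/(k:ℝ)) := by
    by_contra hc
    push_neg at hc
    obtain ⟨h1, h2⟩ := hc
    rw [Metric.mem_closedBall] at h1 h2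
    have t := dist_triangle (x i₀) p (x j₀)
    have e1 : dist (x i₀) p = dist p (x i₀) := dist_comm _ _
    linarith
  rcases this with h' | h'
  · exact ⟨_, ⟨i₀, rfl⟩, h'⟩
  · exact ⟨_, ⟨j₀, rfl⟩, h'⟩

lemma sUnion_preimage_cover (π : X → Y) {𝒱 : Set (Set Y)} (h : ⋃₀ 𝒱 = Set.univ) :
    ⋃₀ ((Set.preimage π) '' 𝒱) = Set.univ := by
  apply Set.eq_univ_of_forall
  intro p
  have : π p ∈ ⋃₀ 𝒱 := h ▸ Set.mem_univ _
  obtain ⟨V, hV, hp⟩ := this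
  exact ⟨π ⁻¹' V, ⟨V, hV, rfl⟩, hp⟩

/-- Easy direction: the `Sset` of a pulled-back small cover is contained in that of the lift. -/
lemma Sset_easy [MetricSpace X] [MetricSpace Y] {n : ℕ}
    (π : X → Y) (πX : X → Z) (πY : Y → Z)
    (hsurj : Function.Surjective π) (hequi : ∀ (g : G) (x : X), π (g • x) = g • π x)
    (hcomm : πY ∘ π = πX) (F : ℕ → Finset G)
    {x : Fin n → X} {y : Fin n → Y} {k j : ℕ}
    (hsub : ∀ i, Metric.closedBall (x i) (1/(k:ℝ)) ⊆ π ⁻¹' (Metric.closedBall (y i) (1/(j:ℝ))))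
    (hYcov : ⋃₀ ballCover y j = Set.univ) :
    Sset F (ballCover y j) πY ⊆ Sset F (ballCover x k) πX := by
  apply Sset_subset_of_NRel
  intro m
  have step1 : NRel (dynJoin (F m) (ballCover x k)) πX ≤
      NRel (dynJoin (F m) ((Set.preimage π) '' (ballCover y j))) πX := by
    apply NRel_dynJoin_mono
    · exact (ballCover_finite y j).image _
    · exact sUnion_preimage_cover π hYcov
    · rintro U ⟨V, ⟨i, rfl⟩, rfl⟩
      refine ⟨(Metric.closedBall (x i) (1/(k:ℝ)))ᶜ, ⟨i, rfl⟩, ?_⟩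
      rw [Set.preimage_compl]
      exact Set.compl_subset_compl.2 (hsub i)
  rw [NRel_pullback π πX πY hsurj hequi hcomm] at step1
  exact step1

/-- Same-space comparison: smaller balls around nearby centers. -/
lemma Sset_shrink [MetricSpace X] {Z' : Type*} {n : ℕ} (π : X → Z') (F : ℕ → Finset G)
    {x x' : Fin n → X} {k l : ℕ}
    (hsub : ∀ i, Metric.closedBall (x' i) (1/(l:ℝ)) ⊆ Metric.closedBall (x i) (1/(k:ℝ)))
    (hcov : ⋃₀ ballCover x k = Set.univ) :
    Sset F (ballCover x k) π ⊆ Sset F (ballCover x' l) π := by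
  apply Sset_subset_of_NRel
  intro m
  apply NRel_dynJoin_mono
  · exact ballCover_finite x k
  · exact hcov
  · rintro U ⟨i, rfl⟩
    exact ⟨(Metric.closedBall (x' i) (1/(l:ℝ)))ᶜ, ⟨i, rfl⟩,
      Set.compl_subset_compl.2 (hsub i)⟩

end Stmt18

namespace Stmt18

open Set Filter

/-- The key stage lemma: at scale `l` there is a lift tuple whose `Sset` at scale `l`
is contained in some `Sset` of the base tuple. -/
lemma stage {G X Y Z : Type*} [Group G]
    [MetricSpace X] [CompactSpace X] [MetricSpace Y]
    [MulAction G X] [MulAction G Y]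
    (π : X → Y) (πX : X → Z) (πY : Y → Z)
    (hπc : Continuous π) (hπs : Function.Surjective π)
    (hπe : ∀ (g : G) (x : X), π (g • x) = g • π x)
    (hcomm : πY ∘ π = πX) (F : ℕ → Finset G) (hFne : ∀ m, (F m).Nonempty)
    {n : ℕ} (y : Fin n → Y) (i₀ j₀ : Fin n)
    (δ₀ : ℝ) (hδ₀ : 0 < δ₀)
    (hsep : Disjoint (Metric.thickening δ₀ (π ⁻¹' {y i₀}))
      (Metric.thickening δ₀ (π ⁻¹' {y j₀})))
    (l : ℕ) (hl : 1/(l:ℝ) < δ₀) (hl1 : 1 ≤ l) :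
    ∃ (c : Fin n → X) (j : ℕ), l ≤ j ∧ (∀ i, π (c i) = y i) ∧
      Sset F (ballCover c l) πX ⊆ Sset F (ballCover y j) πY := by
  classical
  have hlpos : (0:ℝ) < 1/(l:ℝ) := by
    apply div_pos one_pos
    exact_mod_cast hl1
  -- fibers
  set Fib : Fin n → Set X := fun i => π ⁻¹' {y i} with hFib
  have hFibne : ∀ i, (Fib i).Nonempty := fun i => (hπs (y i)).imp fun x hx => hx
  have hFibcpt : ∀ i, IsCompact (Fib i) :=
    fun i => (isClosed_singleton.preimage hπc).isCompact
  -- nets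
  have hnet : ∀ i, ∃ t : Finset X, ↑t ⊆ Fib i ∧ t.Nonempty ∧
      Fib i ⊆ ⋃ a ∈ t, Metric.ball a (1/(l:ℝ)) := by
    intro i
    obtain ⟨t, hts, htf, htc⟩ := (hFibcpt i).finite_cover_balls hlpos
    refine ⟨htf.toFinset, by simpa using hts, ?_, by simpa using htc⟩
    rw [← Finset.coe_nonempty, htf.coe_toFinset]
    obtain ⟨x, hx⟩ := hFibne i
    obtain ⟨_, ⟨a, rfl⟩, h2⟩ := htc hx
    simp only [Set.mem_iUnion] at h2
    obtain ⟨ha, _⟩ := h2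
    exact ⟨a, ha⟩
  choose t ht htne htc using hnet
  -- shrinking: a small ball around `y i` pulls back into the net balls
  have hshrink : ∀ i, ∃ δ : ℝ, 0 < δ ∧
      π ⁻¹' (Metric.closedBall (y i) δ) ⊆ ⋃ a ∈ t i, Metric.closedBall a (1/(l:ℝ)) := by
    intro i
    set O : Set X := ⋃ a ∈ t i, Metric.ball a (1/(l:ℝ)) with hO
    have hOopen : IsOpen O := isOpen_biUnion fun a _ => Metric.isOpen_ball
    have hC : IsCompact Oᶜ := hOopen.isClosed_compl.isCompact
    have hyC : y i ∉ π '' Oᶜ := by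
      rintro ⟨x, hxC, hxy⟩
      exact hxC (htc i (by simp [hFib, hxy]))
    have hopen : IsOpen (π '' Oᶜ)ᶜ := (hC.image hπc).isClosed.isOpen_compl
    obtain ⟨ε, hε, hball⟩ := Metric.isOpen_iff.1 hopen (y i) hyC
    refine ⟨ε/2, half_pos hε, ?_⟩
    intro x hx
    have hπx : π x ∈ Metric.ball (y i) ε := by
      rw [Metric.mem_ball]
      calc dist (π x) (y i) ≤ ε/2 := Metric.mem_closedBall.1 hx
        _ < ε := by linarith
    have : π x ∉ π '' Oᶜ := hball hπx
    have hxO : x ∈ O := by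
      by_contra hxC
      exact this ⟨x, hxC, rfl⟩
    obtain ⟨_, ⟨a, rfl⟩, h2⟩ := hxO
    simp only [Set.mem_iUnion] at h2
    obtain ⟨ha, hmem⟩ := h2
    exact Set.mem_biUnion ha (Metric.ball_subset_closedBall hmem)
  choose δ hδpos hδsub using hshrink
  -- choose j
  have hne : (Finset.univ : Finset (Fin n)).Nonempty := ⟨i₀, Finset.mem_univ _⟩
  set δm : ℝ := Finset.univ.inf' hne δ with hδm
  have hδmpos : 0 < δm := by
    rw [hδm, Finset.lt_inf'_iff]
    exact fun i _ => hδpos i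
  obtain ⟨N, hN⟩ := exists_nat_gt (1/δm)
  set j : ℕ := max l N with hj
  have hjl : l ≤ j := le_max_left _ _
  have hjδ : ∀ i, (1:ℝ)/(j:ℝ) ≤ δ i := by
    intro i
    have hNpos : (0:ℝ) < N := lt_trans (div_pos one_pos hδmpos) hN
    have hjpos : (0:ℝ) < (j:ℝ) := by
      have : (N:ℝ) ≤ (j:ℝ) := by exact_mod_cast le_max_right l N
      linarith
    have h1 : (1:ℝ)/(j:ℝ) ≤ 1/(N:ℝ) := by
      apply div_le_div_of_nonneg_left one_pos.le hNpos
      exact_mod_cast le_max_right l N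
    have h2 : (1:ℝ)/(N:ℝ) < δm := by
      rw [div_lt_iff₀ hNpos]
      rw [div_lt_iff₀ hδmpos] at hN
      linarith [mul_comm (δm) (N:ℝ)]
    have h3 : δm ≤ δ i := Finset.inf'_le _ (Finset.mem_univ i)
    linarith
  -- the net covers
  set J : Fin n → Finset (Set X) :=
    fun i => (t i).image (fun a => (Metric.closedBall a (1/(l:ℝ)))ᶜ) with hJ
  have hJne : ∀ i, (J i).Nonempty := fun i => (htne i).image _
  -- key disjointness: no point is within 1/l of both nets at i₀ and j₀
  have hkey : ∀ p : X, (∀ a ∈ t i₀, p ∉ Metric.closedBall a (1/(l:ℝ))) ∨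
      (∀ a ∈ t j₀, p ∉ Metric.closedBall a (1/(l:ℝ))) := by
    intro p
    by_contra hc
    push_neg at hc
    obtain ⟨⟨a, ha, hpa⟩, ⟨b, hb, hpb⟩⟩ := hc
    have h1 : p ∈ Metric.thickening δ₀ (Fib i₀) := by
      rw [Metric.mem_thickening_iff]
      exact ⟨a, ht i₀ ha, lt_of_le_of_lt (Metric.mem_closedBall.1 hpa) hl⟩
    have h2 : p ∈ Metric.thickening δ₀ (Fib j₀) := by
      rw [Metric.mem_thickening_iff]
      exact ⟨b, ht j₀ hb, lt_of_le_of_lt (Metric.mem_closedBall.1 hpb) hl⟩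
    exact Set.disjoint_iff.1 hsep ⟨h1, h2⟩
  have hmem_sInter : ∀ (i : Fin n) (p : X),
      p ∈ ⋂₀ ((J i : Set (Set X))) ↔ ∀ a ∈ t i, p ∉ Metric.closedBall a (1/(l:ℝ)) := by
    intro i p
    simp only [Set.mem_sInter, hJ, Finset.coe_image, Set.mem_image, Finset.mem_coe]
    constructor
    · intro h a ha
      exact h _ ⟨a, ha, rfl⟩
    · rintro h W ⟨a, ha, rfl⟩
      exact h a ha
  have hC_cov : ⋃₀ (Set.range fun i => ⋂₀ ((J i : Set (Set X)))) = Set.univ := by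
    apply Set.eq_univ_of_forall
    intro p
    rcases hkey p with h | h
    · exact ⟨_, ⟨i₀, rfl⟩, (hmem_sInter i₀ p).2 h⟩
    · exact ⟨_, ⟨j₀, rfl⟩, (hmem_sInter j₀ p).2 h⟩
  have hsel_cov : ∀ s ∈ Fintype.piFinset J, ⋃₀ (Set.range s) = Set.univ := by
    intro s hs
    apply Set.eq_univ_of_forall
    intro p
    have hsi : ∀ i, ∃ a ∈ t i, s i = (Metric.closedBall a (1/(l:ℝ)))ᶜ := by
      intro i
      have := Fintype.mem_piFinset.1 hs i
      rw [hJ] at this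
      obtain ⟨a, ha, haa⟩ := Finset.mem_image.1 this
      exact ⟨a, ha, haa.symm⟩
    obtain ⟨a, ha, hsa⟩ := hsi i₀
    obtain ⟨b, hb, hsb⟩ := hsi j₀
    rcases hkey p with h | h
    · exact ⟨s i₀, ⟨i₀, rfl⟩, by rw [hsa]; exact h a ha⟩
    · exact ⟨s j₀, ⟨j₀, rfl⟩, by rw [hsb]; exact h b hb⟩
  -- (a) base cover ≤ the intersection cover
  have hchain : ∀ m, NRel (dynJoin (F m) (ballCover y j)) πY ≤
      NRel (dynJoin (F m) (Set.range fun i => ⋂₀ ((J i : Set (Set X))))) πX := by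
    intro m
    rw [← NRel_pullback π πX πY hπs hπe hcomm (ballCover y j)]
    apply NRel_dynJoin_mono
    · exact Set.finite_range _
    · exact hC_cov
    · rintro U ⟨i, rfl⟩
      refine ⟨π ⁻¹' ((Metric.closedBall (y i) (1/(j:ℝ)))ᶜ), ⟨_, ⟨i, rfl⟩, rfl⟩, ?_⟩
      intro z hz
      rw [hmem_sInter i z] at hz
      rw [Set.mem_preimage, Set.mem_compl_iff]
      intro hπz
      have : z ∈ π ⁻¹' (Metric.closedBall (y i) (δ i)) := by
        refine Set.mem_preimage.2 (Metric.closedBall_subset_closedBall (hjδ i) hπz)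
      obtain ⟨_, ⟨a, rfl⟩, h2⟩ := hδsub i this
      simp only [Set.mem_iUnion] at h2
      obtain ⟨ha, hmem⟩ := h2
      exact hz a ha hmem
  -- (b) product bound
  have hprod : ∀ m, NRel (dynJoin (F m) (Set.range fun i => ⋂₀ ((J i : Set (Set X))))) πX ≤
      ∏ s ∈ Fintype.piFinset J, NRel (dynJoin (F m) (Set.range s)) πX := by
    intro m
    apply NRel_le
    intro z
    calc coverNum (dynJoin (F m) (Set.range fun i => ⋂₀ ((J i : Set (Set X))))) (πX ⁻¹' {z})
        ≤ ∏ s ∈ Fintype.piFinset J, coverNum (dynJoin (F m) (Set.range s)) (πX ⁻¹' {z}) :=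
          coverNum_sInter_le_prod J hJne hC_cov _
      _ ≤ ∏ s ∈ Fintype.piFinset J, NRel (dynJoin (F m) (Set.range s)) πX := by
          apply Finset.prod_le_prod'
          intro s hs
          exact cn_le_NRel πX (dynJoin_finite (Set.finite_range s))
            (sUnion_dynJoin_univ (hsel_cov s hs)) z
  -- (c) pigeonhole
  have hpig : ∃ s ∈ Fintype.piFinset J,
      Sset F (Set.range s) πX ⊆ Sset F (ballCover y j) πY := by
    refine pigeonhole (Fintype.piFinset_nonempty.2 hJne)
      (fun s => Sset F (Set.range s) πX) _ ?_ ?_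
    · intro s _ a b ha hab
      exact Sset_upward hFne ha hab
    · intro α hα
      obtain ⟨s₀, hs₀⟩ := Fintype.piFinset_nonempty.2 hJne
      refine ⟨(hα s₀ hs₀).1, ?_⟩
      have hz : hRelU F (Set.range fun i => ⋂₀ ((J i : Set (Set X)))) πX α = 0 :=
        hRelU_zero_of_prod hprod (fun s hs => (hα s hs).2)
      exact le_antisymm (hz ▸ hRelU_le_hRelU hchain α) zero_le
  obtain ⟨s, hs, hincl⟩ := hpig
  -- convert the selection to a tuple of centers
  have hsi : ∀ i, ∃ a, a ∈ t i ∧ s i = (Metric.closedBall a (1/(l:ℝ)))ᶜ := by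
    intro i
    have := Fintype.mem_piFinset.1 hs i
    rw [hJ] at this
    obtain ⟨a, ha, haa⟩ := Finset.mem_image.1 this
    exact ⟨a, ha, haa.symm⟩
  choose c hct hcs using hsi
  have hrange : ballCover c l = Set.range s := by
    ext V
    constructor
    · rintro ⟨i, rfl⟩
      exact ⟨i, hcs i⟩
    · rintro ⟨i, rfl⟩
      exact ⟨i, hcs i⟩
  refine ⟨c, j, hjl, fun i => ht i (hct i), ?_⟩
  rw [hrange]
  exact hincl

end Stmt18

namespace Stmt18

open Set Filter

lemma exists_nat_bound {c : ℝ} (hc : 0 < c) : ∃ N : ℕ, 1 ≤ N ∧ ∀ j : ℕ, N ≤ j → 1/(j:ℝ) < c := by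
  obtain ⟨M, hM⟩ := exists_nat_gt (1/c)
  refine ⟨M + 1, Nat.le_add_left 1 M, fun j hj => ?_⟩
  have hj1 : (1:ℝ)/c < (j:ℝ) := by
    calc (1:ℝ)/c < M := hM
      _ ≤ (j:ℝ) := by exact_mod_cast le_trans (Nat.le_succ M) hj
  have hj0 : (0:ℝ) < (j:ℝ) := lt_of_le_of_lt (by positivity) hj1
  rw [div_lt_iff₀ hj0]
  calc (1:ℝ) = c * (1/c) := by field_simp
    _ < c * j := by exact (mul_lt_mul_iff_right₀ hc).2 hj1

end Stmt18

open Set Filter Stmt18 in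
theorem stmt18' {G X Y Z : Type*} [Group G] [Countable G]
    [MetricSpace X] [CompactSpace X] [MetricSpace Y] [CompactSpace Y]
    [MetricSpace Z] [CompactSpace Z]
    [MulAction G X] [MulAction G Y] [MulAction G Z]
    (hcX : ∀ g : G, Continuous fun x : X => g • x)
    (hcY : ∀ g : G, Continuous fun y : Y => g • y)
    (hcZ : ∀ g : G, Continuous fun z : Z => g • z)
    (π : X → Y) (πX : X → Z) (πY : Y → Z)
    (hπ : IsFactorMap G π) (hπX : IsFactorMap G πX) (hπY : IsFactorMap G πY)
    (hcomm : πY ∘ π = πX)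
    (F : ℕ → Finset G) (hF : IsFolnerSeq G F) (hFmono : ∀ n, F n ⊆ F (n + 1))
    {n : ℕ} (y : Fin n → Y) (hy : ¬ IsDiag y) (α : ℝ)
    (hdim : tupleDim F y πY = α) :
    ∃ x : Fin n → X, (∀ i, π (x i) = y i) ∧ ¬ IsDiag x ∧ tupleDim F x πX = α := by
  classical
  obtain ⟨hπc, hπs, hπe⟩ := hπ
  have hFne : ∀ m, (F m).Nonempty := hF.1
  -- two distinct coordinates
  have hy' : ∃ i j, y i ≠ y j := by
    by_contra h
    push_neg at h
    exact hy fun i j => h i j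
  obtain ⟨i₀, j₀, hyij⟩ := hy'
  -- fibers
  have hFibcpt : ∀ i : Fin n, IsCompact (π ⁻¹' {y i}) :=
    fun i => (isClosed_singleton.preimage hπc).isCompact
  have hFibdisj : Disjoint (π ⁻¹' {y i₀}) (π ⁻¹' {y j₀}) := by
    rw [Set.disjoint_iff]
    rintro x ⟨h1, h2⟩
    rw [Set.mem_preimage, Set.mem_singleton_iff] at h1 h2
    exact hyij (by rw [← h1, ← h2])
  obtain ⟨δ₀, hδ₀, hsep⟩ := hFibdisj.exists_thickenings (hFibcpt i₀) (hFibcpt j₀).isClosed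
  obtain ⟨L₀, hL₀1, hL₀⟩ := exists_nat_bound hδ₀
  -- stage construction at every scale
  have hstage : ∀ m : ℕ, ∃ (c : Fin n → X) (j : ℕ), (m + L₀) ≤ j ∧ (∀ i, π (c i) = y i) ∧
      Sset F (ballCover c (m + L₀)) πX ⊆ Sset F (ballCover y j) πY :=
    fun m => stage π πX πY hπc hπs hπe hcomm F hFne y i₀ j₀ δ₀ hδ₀ hsep (m + L₀)
      (hL₀ _ (Nat.le_add_left _ _)) (le_trans hL₀1 (Nat.le_add_left _ _))
  choose xl j2 hj2ge hxl_lift hxl_incl using hstage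
  -- compactness and a convergent subsequence
  have hK : IsCompact (Set.pi Set.univ fun i : Fin n => π ⁻¹' {y i}) :=
    isCompact_univ_pi hFibcpt
  have hxlK : ∀ m, xl m ∈ Set.pi Set.univ fun i : Fin n => π ⁻¹' {y i} := by
    intro m
    rw [Set.mem_univ_pi]
    intro i
    rw [Set.mem_preimage, Set.mem_singleton_iff]
    exact hxl_lift m i
  obtain ⟨xs, hxsK, φ, hφ, hφtend⟩ := hK.tendsto_subseq hxlK
  have hxs_lift : ∀ i, π (xs i) = y i := by
    intro i
    have := Set.mem_univ_pi.1 hxsK i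
    rwa [Set.mem_preimage, Set.mem_singleton_iff] at this
  have hxsne : xs i₀ ≠ xs j₀ := fun h => hyij (by rw [← hxs_lift i₀, ← hxs_lift j₀, h])
  -- coverage thresholds
  have hdX : 0 < dist (xs i₀) (xs j₀) := dist_pos.2 hxsne
  obtain ⟨KX, hKX1, hKX⟩ := exists_nat_bound (half_pos hdX)
  have hXcov : ∀ k, KX ≤ k → ⋃₀ ballCover xs k = Set.univ := by
    intro k hk
    apply ballCover_covers (i₀ := i₀) (j₀ := j₀)
    have := hKX k hk
    linarith
  have hdY : 0 < dist (y i₀) (y j₀) := dist_pos.2 hyij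
  obtain ⟨JY, hJY1, hJY⟩ := exists_nat_bound (half_pos hdY)
  have hYcov : ∀ j, JY ≤ j → ⋃₀ ballCover y j = Set.univ := by
    intro j hj
    apply ballCover_covers (i₀ := i₀) (j₀ := j₀)
    have := hJY j hj
    linarith
  -- Y-side monotonicity of Sset
  have hYmono : ∀ j j' : ℕ, JY ≤ j → j ≤ j' →
      Sset F (ballCover y j) πY ⊆ Sset F (ballCover y j') πY := by
    intro j j' hj hjj'
    refine Sset_shrink πY F (fun i => ?_) (hYcov j hj)
    apply Metric.closedBall_subset_closedBall
    have hj0 : (0:ℝ) < (j:ℝ) := by exact_mod_cast lt_of_lt_of_le hJY1 hj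
    exact div_le_div_of_nonneg_left one_pos.le hj0 (by exact_mod_cast hjj')
  -- easy direction
  have heasy : ∀ j : ℕ, JY ≤ j → ∃ k₀ : ℕ, ∀ k, k₀ ≤ k →
      Sset F (ballCover y j) πY ⊆ Sset F (ballCover xs k) πX := by
    intro j hj
    have hδi : ∀ i : Fin n, ∃ ε : ℝ, 0 < ε ∧ ∀ a : X, dist a (xs i) < ε →
        dist (π a) (y i) < 1/(j:ℝ) := by
      intro i
      have hj0 : (0:ℝ) < 1/(j:ℝ) := by
        apply div_pos one_pos
        exact_mod_cast lt_of_lt_of_le hJY1 hj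
      obtain ⟨ε, hε, hh⟩ := Metric.continuous_iff.1 hπc (xs i) (1/(j:ℝ)) hj0
      exact ⟨ε, hε, fun a ha => by rw [← hxs_lift i]; exact hh a ha⟩
    choose ε hεpos hεsub using hδi
    have hεm : 0 < Finset.univ.inf' ⟨i₀, Finset.mem_univ _⟩ ε :=
      (Finset.lt_inf'_iff _).2 fun i _ => hεpos i
    obtain ⟨k₀, hk₀1, hk₀⟩ := exists_nat_bound hεm
    refine ⟨k₀, fun k hk => ?_⟩
    refine Sset_easy π πX πY hπs hπe hcomm F (fun i a ha => ?_) (hYcov j hj)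
    rw [Set.mem_preimage, Metric.mem_closedBall]
    refine le_of_lt (hεsub i a ?_)
    calc dist a (xs i) ≤ 1/(k:ℝ) := Metric.mem_closedBall.1 ha
      _ < Finset.univ.inf' ⟨i₀, Finset.mem_univ _⟩ ε := hk₀ k hk
      _ ≤ ε i := Finset.inf'_le _ (Finset.mem_univ i)
  -- hard direction
  have hhard : ∀ k jmin : ℕ, KX ≤ k → 1 ≤ k → ∃ j : ℕ, jmin ≤ j ∧
      Sset F (ballCover xs k) πX ⊆ Sset F (ballCover y j) πY := by
    intro k jmin hk hk1
    have h2k : (0:ℝ) < 1/(2*(k:ℝ)) := by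
      apply div_pos one_pos
      have : (0:ℝ) < (k:ℝ) := by exact_mod_cast hk1
      linarith
    have hcoord : ∀ i : Fin n, Tendsto (fun m => xl (φ m) i) atTop (𝓝 (xs i)) :=
      fun i => ((continuous_apply i).tendsto xs).comp hφtend
    have hev1 : ∀ᶠ m in atTop, ∀ i : Fin n, dist (xl (φ m) i) (xs i) < 1/(2*(k:ℝ)) := by
      rw [eventually_all]
      intro i
      obtain ⟨N, hN⟩ := Metric.tendsto_atTop.1 (hcoord i) _ h2k
      exact eventually_atTop.2 ⟨N, hN⟩
    have hev2 : ∀ᶠ m in atTop, 2*k + jmin ≤ m := eventually_ge_atTop _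
    obtain ⟨m, hmdist, hmge⟩ := (hev1.and hev2).exists
    have hφm : 2*k + jmin ≤ φ m := le_trans hmge hφ.le_apply
    refine ⟨j2 (φ m), ?_, ?_⟩
    · calc jmin ≤ φ m := by omega
        _ ≤ φ m + L₀ := Nat.le_add_right _ _
        _ ≤ j2 (φ m) := hj2ge (φ m)
    · refine subset_trans (Sset_shrink πX F (fun i => ?_) (hXcov k hk)) (hxl_incl (φ m))
      intro z hz
      rw [Metric.mem_closedBall] at hz ⊢
      have hkpos : (0:ℝ) < (k:ℝ) := by exact_mod_cast hk1
      have hl2k : 1/((φ m + L₀ : ℕ):ℝ) ≤ 1/(2*(k:ℝ)) := by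
        have h1 : (2*(k:ℝ)) ≤ ((φ m + L₀ : ℕ):ℝ) := by
          push_cast
          have : 2*k ≤ φ m := by omega
          have h2 : ((2*k : ℕ):ℝ) ≤ ((φ m : ℕ):ℝ) := by exact_mod_cast this
          push_cast at h2
          linarith [(Nat.cast_nonneg L₀ : (0:ℝ) ≤ L₀)]
        exact div_le_div_of_nonneg_left one_pos.le (by linarith) h1
      have h1k : 1/(2*(k:ℝ)) + 1/(2*(k:ℝ)) = 1/(k:ℝ) := by
        rw [← add_div]
        rw [show (1:ℝ) + 1 = 2 from by norm_num]
        rw [div_eq_div_iff (by linarith) (by linarith)]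
        ring
      calc dist z (xs i) ≤ dist z (xl (φ m) i) + dist (xl (φ m) i) (xs i) :=
            dist_triangle _ _ _
        _ ≤ 1/((φ m + L₀ : ℕ):ℝ) + 1/(2*(k:ℝ)) :=
            add_le_add hz (le_of_lt (hmdist i))
        _ ≤ 1/(2*(k:ℝ)) + 1/(2*(k:ℝ)) := by linarith
        _ = 1/(k:ℝ) := h1k
  -- conclusion
  have hdim' : limUnder atTop (fun j : ℕ => DU F (ballCover y j) πY) = α := hdim
  refine ⟨xs, hxs_lift, fun h => hxsne (h i₀ j₀), ?_⟩
  show limUnder atTop (fun k : ℕ => DU F (ballCover xs k) πX) = α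
  by_cases hcase : ∃ j, JY ≤ j ∧ (Sset F (ballCover y j) πY).Nonempty
  · -- Case B : eventually nonempty Ssets on the base
    obtain ⟨js, hjsY, hjsne⟩ := hcase
    have hSne : ∀ j, js ≤ j → (Sset F (ballCover y j) πY).Nonempty :=
      fun j hj => hjsne.mono (hYmono js j hjsY hj)
    set w : ℕ → ℝ := fun m => DU F (ballCover y (js + m)) πY with hw
    have hwanti : Antitone w := by
      intro m m' hmm'
      refine csInf_le_csInf ⟨0, Sset_nonneg⟩ (hSne (js + m) (Nat.le_add_right _ _)) ?_
      exact hYmono (js + m) (js + m') (le_trans hjsY (Nat.le_add_right _ _))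
        (Nat.add_le_add_left hmm' js)
    have hbdd : BddBelow (Set.range w) := by
      refine ⟨0, ?_⟩
      rintro _ ⟨m, rfl⟩
      exact DU_nonneg F _ πY
    have htw : Tendsto w atTop (𝓝 (⨅ m, w m)) := tendsto_atTop_ciInf hwanti hbdd
    have htv : Tendsto (fun j : ℕ => DU F (ballCover y j) πY) atTop (𝓝 (⨅ m, w m)) := by
      refine (tendsto_add_atTop_iff_nat js).1 ?_
      have heq : (fun m : ℕ => DU F (ballCover y (m + js)) πY) = w := by
        funext m
        rw [hw]
        rw [Nat.add_comm]
      rw [heq]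
      exact htw
    have hαL : α = ⨅ m, w m := by rw [← hdim']; exact htv.limUnder_eq
    have hαle : ∀ j, js ≤ j → α ≤ DU F (ballCover y j) πY := by
      intro j hj
      obtain ⟨m, rfl⟩ : ∃ m, j = js + m := ⟨j - js, by omega⟩
      rw [hαL]
      exact ciInf_le hbdd m
    have htu : Tendsto (fun k : ℕ => DU F (ballCover xs k) πX) atTop (𝓝 α) := by
      rw [Metric.tendsto_atTop]
      intro εr hεr
      have hev : ∀ᶠ m in atTop, w m < α + εr :=
        htw.eventually_lt_const (by rw [hαL]; linarith)
      obtain ⟨m₁, hm₁⟩ := hev.exists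
      obtain ⟨k₀, hk₀⟩ := heasy (js + m₁) (le_trans hjsY (Nat.le_add_right _ _))
      refine ⟨max k₀ (max KX 1), fun k hk => ?_⟩
      have hkk₀ : k₀ ≤ k := le_trans (le_max_left _ _) hk
      have hkKX : KX ≤ k := le_trans (le_trans (le_max_left _ _) (le_max_right _ _)) hk
      have hk1 : 1 ≤ k := le_trans (le_trans (le_max_right _ _) (le_max_right _ _)) hk
      have h1 : Sset F (ballCover y (js + m₁)) πY ⊆ Sset F (ballCover xs k) πX :=
        hk₀ k hkk₀
      obtain ⟨jb, hjbge, h2⟩ := hhard k js hkKX hk1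
      have hup : DU F (ballCover xs k) πX ≤ w m₁ :=
        csInf_le_csInf ⟨0, Sset_nonneg⟩ (hSne (js + m₁) (Nat.le_add_right _ _)) h1
      have hlo : DU F (ballCover y jb) πY ≤ DU F (ballCover xs k) πX :=
        csInf_le_csInf ⟨0, Sset_nonneg⟩ ((hSne (js + m₁) (Nat.le_add_right _ _)).mono h1) h2
      have hαlo : α ≤ DU F (ballCover xs k) πX := le_trans (hαle jb hjbge) hlo
      rw [Real.dist_eq, abs_lt]
      constructor <;> [linarith; linarith]
    exact htu.limUnder_eq
  · -- Case A : all Ssets on the base are empty, α = 0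
    push_neg at hcase
    have hv0 : ∀ j, JY ≤ j → DU F (ballCover y j) πY = 0 := by
      intro j hj
      rw [DU_eq_sInf_Sset, hcase j hj, Real.sInf_empty]
    have htv : Tendsto (fun j : ℕ => DU F (ballCover y j) πY) atTop (𝓝 0) := by
      refine Tendsto.congr' ?_ (tendsto_const_nhds : Tendsto (fun _ : ℕ => (0:ℝ)) atTop (𝓝 0))
      exact (eventually_ge_atTop JY).mono fun j hj => (hv0 j hj).symm
    have hα0 : α = 0 := by rw [← hdim']; exact htv.limUnder_eq
    have hu0 : ∀ k, max KX 1 ≤ k → DU F (ballCover xs k) πX = 0 := by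
      intro k hk
      obtain ⟨j, hjge, hincl⟩ := hhard k JY (le_trans (le_max_left _ _) hk)
        (le_trans (le_max_right _ _) hk)
      have hempty : Sset F (ballCover xs k) πX = ∅ :=
        Set.subset_empty_iff.1 (hcase j hjge ▸ hincl)
      rw [DU_eq_sInf_Sset, hempty, Real.sInf_empty]
    have htu : Tendsto (fun k : ℕ => DU F (ballCover xs k) πX) atTop (𝓝 0) := by
      refine Tendsto.congr' ?_ (tendsto_const_nhds : Tendsto (fun _ : ℕ => (0:ℝ)) atTop (𝓝 0))
      exact (eventually_ge_atTop (max KX 1)).mono fun k hk => (hu0 k hk).symm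
    rw [hα0]
    exact htu.limUnder_eq

theorem stmt18 {G X Y Z : Type*} [Group G] [Countable G]
    [MetricSpace X] [CompactSpace X] [MetricSpace Y] [CompactSpace Y]
    [MetricSpace Z] [CompactSpace Z]
    [MulAction G X] [MulAction G Y] [MulAction G Z]
    (hcX : ∀ g : G, Continuous fun x : X => g • x)
    (hcY : ∀ g : G, Continuous fun y : Y => g • y)
    (hcZ : ∀ g : G, Continuous fun z : Z => g • z)
    (π : X → Y) (πX : X → Z) (πY : Y → Z)
    (hπ : IsFactorMap G π) (hπX : IsFactorMap G πX) (hπY : IsFactorMap G πY)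
    (hcomm : πY ∘ π = πX)
    (F : ℕ → Finset G) (hF : IsFolnerSeq G F) (hFmono : ∀ n, F n ⊆ F (n + 1))
    {n : ℕ} (y : Fin n → Y) (hy : ¬ IsDiag y) (α : ℝ)
    (hdim : tupleDim F y πY = α) :
    ∃ x : Fin n → X, (∀ i, π (x i) = y i) ∧ ¬ IsDiag x ∧ tupleDim F x πX = α :=
  stmt18' hcX hcY hcZ π πX πY hπ hπX hπY hcomm F hF hFmono y hy α hdim
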